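/- If f : ℝ → ℝ is a positive log-concave probability density, then its moment generating function is finite in a neighborhood of zero: there exists a > 0 such that for all t with |t| < a, the integral ∫ exp(t·s) · f(s) ds over ℝ is finite. -/

import Mathlib

open MeasureTheory Real

/-- `exp (-c * |s|)` is integrable on ℝ for `c > 0`. -/
lemma integrable_exp_neg_mul_abs' {c : ℝ} (hc : 0 < c) :
    Integrable (fun s : ℝ => Real.exp (-c * |s|)) := by
  have hIoi : IntegrableOn (fun s : ℝ => Real.exp (-c * |s|)) (Set.Ioi 0) := by
    refine (exp_neg_integrableOn_Ioi 0 hc).congr_fun (fun x hx => ?_) measurableSet_Ioi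
    rw [abs_of_pos (by exact hx)]
  have hIic : IntegrableOn (fun s : ℝ => Real.exp (-c * |s|)) (Set.Iic 0) := by
    rw [IntegrableOn, ← Measure.map_neg_eq_self (volume : Measure ℝ)]
    have m : MeasurableEmbedding fun x : ℝ => -x :=
      (Homeomorph.neg ℝ).measurableEmbedding
    rw [m.restrict_map, m.integrable_map_iff]
    simp only [Function.comp_def, abs_neg, Set.neg_preimage, Set.neg_Iic, neg_zero]
    exact Iff.mpr integrableOn_Ici_iff_integrableOn_Ioi hIoi
  have := hIic.union hIoi
  rwa [Set.Iic_union_Ioi, integrableOn_univ] at this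

lemma exists_decrease_right (f : ℝ → ℝ) (hpos : ∀ x, 0 < f x)
    (hInt : Integrable f) (a : ℝ) : ∃ p q : ℝ, a ≤ p ∧ p < q ∧ f q < f p := by
  by_contra h
  push_neg at h
  have hIO : IntegrableOn f (Set.Ioi a) := hInt.integrableOn
  have hc : Integrable (fun _ : ℝ => f a) (volume.restrict (Set.Ioi a)) := by
    refine Integrable.mono hIO aestronglyMeasurable_const ?_
    refine (ae_restrict_iff' measurableSet_Ioi).mpr (ae_of_all _ fun x hx => ?_)
    rw [Real.norm_eq_abs, Real.norm_eq_abs, abs_of_pos (hpos a), abs_of_pos (hpos x)]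
    exact h a x le_rfl hx
  rw [integrable_const_iff] at hc
  rcases hc with h0 | hfin
  · exact (hpos a).ne' h0
  · rw [isFiniteMeasure_restrict, Real.volume_Ioi] at hfin
    exact hfin rfl

lemma exists_decrease_left (f : ℝ → ℝ) (hpos : ∀ x, 0 < f x)
    (hInt : Integrable f) (a : ℝ) : ∃ r s : ℝ, r < s ∧ s ≤ a ∧ f r < f s := by
  by_contra h
  push_neg at h
  have hIO : IntegrableOn f (Set.Iio a) := hInt.integrableOn
  have hc : Integrable (fun _ : ℝ => f a) (volume.restrict (Set.Iio a)) := by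
    refine Integrable.mono hIO aestronglyMeasurable_const ?_
    refine (ae_restrict_iff' measurableSet_Iio).mpr (ae_of_all _ fun x hx => ?_)
    rw [Real.norm_eq_abs, Real.norm_eq_abs, abs_of_pos (hpos a), abs_of_pos (hpos x)]
    exact h x a hx le_rfl
  rw [integrable_const_iff] at hc
  rcases hc with h0 | hfin
  · exact (hpos a).ne' h0
  · rw [isFiniteMeasure_restrict, Real.volume_Iio] at hfin
    exact hfin rfl

/-- A concave function on ℝ lies below the secant line through `(u, g u)` and `(v, g v)`
outside the open interval `(u, v)`. -/
lemma concave_line_bound {g : ℝ → ℝ} (hg : ConcaveOn ℝ Set.univ g) {u v x : ℝ}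
    (huv : u < v) (hx : x ≤ u ∨ v ≤ x) :
    g x ≤ g u + ((g v - g u) / (v - u)) * (x - u) := by
  have hvu : (0 : ℝ) < v - u := by linarith
  have hcancel : (g v - g u) / (v - u) * (v - u) = g v - g u :=
    div_mul_cancel₀ _ (ne_of_gt hvu)
  rcases hx with hxu | hvx
  · rcases eq_or_lt_of_le hxu with rfl | hxu'
    · simp
    · have hs := hg.slope_anti_adjacent (Set.mem_univ x) (Set.mem_univ v) hxu' huv
      -- (g v - g u)/(v - u) ≤ (g u - g x)/(u - x)
      have hux : (0 : ℝ) < u - x := by linarith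
      have := (le_div_iff₀ hux).mp hs
      have hring : (g v - g u) / (v - u) * (x - u) = -((g v - g u) / (v - u) * (u - x)) := by
        ring
      linarith
  · rcases eq_or_lt_of_le hvx with rfl | hvx'
    · linarith [hcancel]
    · have hs := hg.slope_anti_adjacent (Set.mem_univ u) (Set.mem_univ x) huv hvx'
      -- (g x - g v)/(x - v) ≤ (g v - g u)/(v - u)
      have hxv : (0 : ℝ) < x - v := by linarith
      have := (div_le_iff₀ hxv).mp hs
      have hring : (g v - g u) / (v - u) * (x - u)
          = (g v - g u) / (v - u) * (x - v) + (g v - g u) / (v - u) * (v - u) := by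
        ring
      linarith [hcancel]

theorem logconcave_density_mgf_finite_near_zero
    (f : ℝ → ℝ)
    (hmeas : Measurable f)
    (hpos : ∀ x, 0 < f x)
    (hint : ∫ x, f x = 1)
    (hconc : ConcaveOn ℝ Set.univ (fun x => Real.log (f x))) :
    ∃ a > 0, ∀ t : ℝ, |t| < a → Integrable (fun s : ℝ => Real.exp (t * s) * f s) := by
  set g : ℝ → ℝ := fun x => Real.log (f x) with hg
  have hInt : Integrable f := integrable_of_integral_eq_one hint
  obtain ⟨p, q, hp0, hpq, hfq⟩ := exists_decrease_right f hpos hInt 0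
  obtain ⟨r, s, hrs, hs0, hfr⟩ := exists_decrease_left f hpos hInt 0
  have hgq : g q < g p := Real.log_lt_log (hpos q) hfq
  have hgr : g r < g s := Real.log_lt_log (hpos r) hfr
  set m : ℝ := (g q - g p) / (q - p) with hm
  set m' : ℝ := (g s - g r) / (s - r) with hm'
  have hmneg : m < 0 := div_neg_of_neg_of_pos (by linarith) (by linarith)
  have hm'pos : 0 < m' := div_pos (by linarith) (by linarith)
  set a : ℝ := min (-m) m' with ha
  have hapos : 0 < a := lt_min (by linarith) hm'pos
  have ham : a ≤ -m := min_le_left _ _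
  have ham' : a ≤ m' := min_le_right _ _
  set b : ℝ := max (max (g p - m * p) (g r - m' * r))
      (max (g r + m' * (q - r) + a * q) (g p + m * (r - p) - a * r)) with hb
  have hb1 : g p - m * p ≤ b := le_trans (le_max_left _ _) (le_max_left _ _)
  have hb2 : g r - m' * r ≤ b := le_trans (le_max_right _ _) (le_max_left _ _)
  have hb3 : g r + m' * (q - r) + a * q ≤ b := le_trans (le_max_left _ _) (le_max_right _ _)
  have hb4 : g p + m * (r - p) - a * r ≤ b := le_trans (le_max_right _ _) (le_max_right _ _)
  have hbound : ∀ x, g x ≤ -a * |x| + b := by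
    intro x
    rcases le_or_gt 0 x with hx0 | hx0
    · rw [abs_of_nonneg hx0]
      by_cases hcase : x ≤ p ∨ q ≤ x
      · have h1 := concave_line_bound hconc hpq hcase
        have hmx : m * x ≤ -a * x := mul_le_mul_of_nonneg_right (by linarith) hx0
        have hring : m * (x - p) = m * x - m * p := by ring
        rw [← hm] at h1
        linarith
      · push_neg at hcase
        have hxB : x ≤ r ∨ s ≤ x := Or.inr (by linarith)
        have h1 := concave_line_bound hconc hrs hxB
        rw [← hm'] at h1
        have h2 : m' * (x - r) ≤ m' * (q - r) :=
          mul_le_mul_of_nonneg_left (by linarith) hm'pos.le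
        have h3 : a * x ≤ a * q := mul_le_mul_of_nonneg_left (by linarith) hapos.le
        linarith
    · rw [abs_of_neg hx0]
      by_cases hcase : x ≤ r ∨ s ≤ x
      · have h1 := concave_line_bound hconc hrs hcase
        rw [← hm'] at h1
        have hmx : m' * x ≤ a * x := by nlinarith
        have hring : m' * (x - r) = m' * x - m' * r := by ring
        have : -a * -x = a * x := by ring
        linarith
      · push_neg at hcase
        have hxA : x ≤ p ∨ q ≤ x := Or.inl (by linarith)
        have h1 := concave_line_bound hconc hpq hxA
        rw [← hm] at h1
        have h2 : m * (x - p) ≤ m * (r - p) :=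
          mul_le_mul_of_nonpos_left (by linarith) hmneg.le
        have h3 : a * r ≤ a * x := mul_le_mul_of_nonneg_left (by linarith) hapos.le
        have : -a * -x = a * x := by ring
        linarith
  refine ⟨a, hapos, fun t ht => ?_⟩
  have hc : 0 < a - |t| := by linarith
  have hBint : Integrable (fun x : ℝ => Real.exp b * Real.exp (-(a - |t|) * |x|)) :=
    (integrable_exp_neg_mul_abs' hc).const_mul _
  refine hBint.mono' ?_ (ae_of_all _ fun x => ?_)
  · exact ((Real.measurable_exp.comp (measurable_const.mul measurable_id)).mul
      hmeas).aestronglyMeasurable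
  · have hfb : f x ≤ Real.exp (-a * |x| + b) := by
      have h := hbound x
      calc f x = Real.exp (g x) := (Real.exp_log (hpos x)).symm
        _ ≤ _ := Real.exp_le_exp.mpr h
    rw [Real.norm_eq_abs, abs_of_pos (mul_pos (Real.exp_pos _) (hpos x))]
    calc Real.exp (t * x) * f x
        ≤ Real.exp (t * x) * Real.exp (-a * |x| + b) :=
          mul_le_mul_of_nonneg_left hfb (Real.exp_pos _).le
      _ = Real.exp b * Real.exp (t * x + -a * |x|) := by
          rw [← Real.exp_add, ← Real.exp_add]; ring_nf
      _ ≤ Real.exp b * Real.exp (-(a - |t|) * |x|) := by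
          refine mul_le_mul_of_nonneg_left (Real.exp_le_exp.mpr ?_) (Real.exp_pos b).le
          have htx : t * x ≤ |t| * |x| := le_trans (le_abs_self _) (le_of_eq (abs_mul t x))
          nlinarith
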